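/- Let E be a real inner product space and V : E → ℝ differentiable with L̃-Lipschitz gradient. Fix w ∈ E, a step size α > 0, a bias bound δ ≥ 0, and a vector g ∈ E with ‖g − ∇V(w)‖ ≤ δ. Then the inexact gradient-ascent step satisfies V(w + αg) ≥ V(w) + (α/2 − α²L̃)‖∇V(w)‖² − (α/2 + α²L̃)δ². -/

import Mathlib

open intervalIntegral in
lemma descent_lemma
    {E : Type*} [NormedAddCommGroup E] [InnerProductSpace ℝ E] [CompleteSpace E]
    (V : E → ℝ) (Ltil : ℝ) (hLtil : 0 ≤ Ltil)
    (hV : Differentiable ℝ V)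
    (hLip : ∀ x y, ‖gradient V x - gradient V y‖ ≤ Ltil * ‖x - y‖)
    (x d : E) :
    V x + inner ℝ (gradient V x) d - Ltil / 2 * ‖d‖ ^ 2 ≤ V (x + d) := by
  set f : ℝ → ℝ := fun t => V (x + t • d) with hf
  have hderiv : ∀ t : ℝ, HasDerivAt f (inner ℝ (gradient V (x + t • d)) d) t := by
    intro t
    have h1 : HasFDerivAt V ((InnerProductSpace.toDual ℝ E) (gradient V (x + t • d)))
        (x + t • d) := (hV _).hasGradientAt.hasFDerivAt
    have h2 : HasDerivAt (fun t : ℝ => x + t • d) d t := by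
      simpa using ((hasDerivAt_id t).smul_const d).const_add x
    simpa [hf, Function.comp_def] using h1.comp_hasDerivAt t h2
  have hgradcont : Continuous (gradient V) := by
    rcases eq_or_lt_of_le hLtil with h | h
    · have : ∀ y z : E, gradient V y = gradient V z := by
        intro y z
        have := hLip y z
        rw [← h] at this
        simpa [norm_le_zero_iff, sub_eq_zero] using this
      exact continuous_const.congr fun y => this x y
    · exact (LipschitzWith.of_dist_le_mul (K := ⟨Ltil, hLtil⟩) (by
        intro y z
        rw [dist_eq_norm, dist_eq_norm]; exact hLip y z)).continuous
  have hcont : Continuous fun t : ℝ => (inner ℝ (gradient V (x + t • d)) d : ℝ) := by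
    have h1 : Continuous fun t : ℝ => x + t • d := by continuity
    exact (hgradcont.comp h1).inner continuous_const
  have hFTC : ∫ t in (0:ℝ)..1, inner ℝ (gradient V (x + t • d)) d = f 1 - f 0 :=
    integral_eq_sub_of_hasDerivAt (fun t _ => hderiv t)
      (hcont.intervalIntegrable 0 1)
  have hbound : ∀ t ∈ Set.Icc (0:ℝ) 1,
      inner ℝ (gradient V x) d - Ltil * t * ‖d‖ ^ 2
        ≤ (inner ℝ (gradient V (x + t • d)) d : ℝ) := by
    intro t ht
    have h1 : (inner ℝ (gradient V (x + t • d)) d : ℝ) =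
        inner ℝ (gradient V x) d + inner ℝ (gradient V (x + t • d) - gradient V x) d := by
      rw [inner_sub_left]; ring
    rw [h1]
    have h2 : |(inner ℝ (gradient V (x + t • d) - gradient V x) d : ℝ)|
        ≤ Ltil * t * ‖d‖ ^ 2 := by
      calc |(inner ℝ (gradient V (x + t • d) - gradient V x) d : ℝ)|
          ≤ ‖gradient V (x + t • d) - gradient V x‖ * ‖d‖ := abs_real_inner_le_norm _ _
        _ ≤ Ltil * ‖x + t • d - x‖ * ‖d‖ := by
            gcongr; exact hLip _ _
        _ = Ltil * (|t| * ‖d‖) * ‖d‖ := by rw [add_sub_cancel_left, norm_smul]; norm_num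
        _ = Ltil * t * ‖d‖ ^ 2 := by rw [abs_of_nonneg ht.1]; ring
    nlinarith [abs_le.mp h2]
  have hineq : ∫ t in (0:ℝ)..1, (inner ℝ (gradient V x) d - Ltil * t * ‖d‖ ^ 2 : ℝ)
      ≤ ∫ t in (0:ℝ)..1, inner ℝ (gradient V (x + t • d)) d := by
    apply integral_mono_on (by norm_num)
      (((continuous_const.sub ((continuous_const.mul continuous_id).mul
        continuous_const))).intervalIntegrable 0 1)
      (hcont.intervalIntegrable 0 1)
    intro t ht; exact hbound t ht
  have hval : ∫ t in (0:ℝ)..1, (inner ℝ (gradient V x) d - Ltil * t * ‖d‖ ^ 2 : ℝ)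
      = inner ℝ (gradient V x) d - Ltil / 2 * ‖d‖ ^ 2 := by
    have heq : (fun t : ℝ => (inner ℝ (gradient V x) d : ℝ) - Ltil * t * ‖d‖ ^ 2) =
        fun t : ℝ => (inner ℝ (gradient V x) d : ℝ) - (Ltil * ‖d‖ ^ 2) * t := by
      funext t; ring
    rw [heq, intervalIntegral.integral_sub intervalIntegrable_const
      ((by continuity : Continuous fun t : ℝ => Ltil * ‖d‖ ^ 2 * t).intervalIntegrable 0 1),
      intervalIntegral.integral_const_mul, integral_id]
    simp
    ring
  have : f 0 = V x := by simp [hf]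
  have h1 : f 1 = V (x + d) := by simp [hf]
  rw [hval, hFTC, this, h1] at hineq
  linarith

/-- Ascent guarantee for one inexact gradient-ascent step on an `L̃`-smooth
function: `V(w + αg) ≥ V(w) + (α/2 − α²L̃)‖∇V(w)‖² − (α/2 + α²L̃)δ²`. -/
theorem inexact_gradient_ascent_step
    {E : Type*} [NormedAddCommGroup E] [InnerProductSpace ℝ E] [CompleteSpace E]
    (V : E → ℝ) (Ltil : ℝ) (hLtil : 0 ≤ Ltil)
    (hV : Differentiable ℝ V)
    (hLip : ∀ x y, ‖gradient V x - gradient V y‖ ≤ Ltil * ‖x - y‖)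
    (w g : E) (α δ : ℝ) (hα : 0 < α) (hδ : 0 ≤ δ)
    (hg : ‖g - gradient V w‖ ≤ δ) :
    V w + (α / 2 - α ^ 2 * Ltil) * ‖gradient V w‖ ^ 2
        - (α / 2 + α ^ 2 * Ltil) * δ ^ 2 ≤ V (w + α • g) := by
  have hd := descent_lemma V Ltil hLtil hV hLip w (α • g)
  set n := ‖gradient V w‖ with hn
  have hinner : (inner ℝ (gradient V w) (α • g) : ℝ) = α * inner ℝ (gradient V w) g := by
    rw [real_inner_smul_right]
  have hnorm : ‖α • g‖ ^ 2 = α ^ 2 * ‖g‖ ^ 2 := by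
    rw [norm_smul]; simp [abs_of_pos hα]; ring
  rw [hinner, hnorm] at hd
  have h1 : (inner ℝ (gradient V w) g : ℝ) =
      n ^ 2 + inner ℝ (gradient V w) (g - gradient V w) := by
    rw [inner_sub_right, real_inner_self_eq_norm_sq]; ring
  have h2 : |(inner ℝ (gradient V w) (g - gradient V w) : ℝ)| ≤ n * δ := by
    calc |(inner ℝ (gradient V w) (g - gradient V w) : ℝ)|
        ≤ n * ‖g - gradient V w‖ := abs_real_inner_le_norm _ _
      _ ≤ n * δ := mul_le_mul_of_nonneg_left hg (norm_nonneg _)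
  have h3 : ‖g‖ ≤ n + δ := by
    calc ‖g‖ = ‖gradient V w + (g - gradient V w)‖ := by
          congr 1; abel
      _ ≤ n + ‖g - gradient V w‖ := norm_add_le _ _
      _ ≤ n + δ := by linarith
  have hn0 : 0 ≤ n := norm_nonneg _
  have hg0 : 0 ≤ ‖g‖ := norm_nonneg _
  have h4 : ‖g‖ ^ 2 ≤ 2 * n ^ 2 + 2 * δ ^ 2 := by
    have := pow_le_pow_left₀ hg0 h3 2
    nlinarith [sq_nonneg (n - δ)]
  have h5 := abs_le.mp h2
  nlinarith [mul_le_mul_of_nonneg_left h4 (mul_nonneg hLtil (sq_nonneg α)),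
    mul_le_mul_of_nonneg_left h5.1 hα.le,
    mul_nonneg hα.le (sq_nonneg (n - δ))]
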